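/- Let ε and d_6 be real constants and consider the system of ODEs on the domain r_1, r_2, r_3 > 0: ṙ_1 = ε(7/6)d_6 r_2 r_3 sin χ, ṙ_2 = −ε(7/4)d_6 r_1 r_3 sin χ, ṙ_3 = −ε(7/2)d_6 r_1 r_2 sin χ, χ̇ = ε(7/2)d_6 (cos χ/(r_1 r_2 r_3)) ( r_2²r_3²/3 − r_1²r_3²/2 − r_1²r_2² ). Then along every solution both quantities 9r_1² + 4r_2² + r_3² and 2r_2² − r_3² are constant in time; together with the Hamiltonian this makes the normal form integrable. -/

import Mathlib

theorem stmt16 (ε d6 : ℝ) (r1 r2 r3 χ : ℝ → ℝ)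
    (hpos : ∀ t, 0 < r1 t ∧ 0 < r2 t ∧ 0 < r3 t)
    (h1 : ∀ t, HasDerivAt r1 (ε * (7 / 6) * d6 * r2 t * r3 t * Real.sin (χ t)) t)
    (h2 : ∀ t, HasDerivAt r2 (-(ε * (7 / 4) * d6 * r1 t * r3 t * Real.sin (χ t))) t)
    (h3 : ∀ t, HasDerivAt r3 (-(ε * (7 / 2) * d6 * r1 t * r2 t * Real.sin (χ t))) t)
    (h4 : ∀ t, HasDerivAt χ
      (ε * (7 / 2) * d6 * (Real.cos (χ t) / (r1 t * r2 t * r3 t)) *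
        ((r2 t) ^ 2 * (r3 t) ^ 2 / 3 - (r1 t) ^ 2 * (r3 t) ^ 2 / 2
          - (r1 t) ^ 2 * (r2 t) ^ 2)) t) :
    ∀ t s : ℝ,
      9 * (r1 t) ^ 2 + 4 * (r2 t) ^ 2 + (r3 t) ^ 2 =
        9 * (r1 s) ^ 2 + 4 * (r2 s) ^ 2 + (r3 s) ^ 2 ∧
      2 * (r2 t) ^ 2 - (r3 t) ^ 2 = 2 * (r2 s) ^ 2 - (r3 s) ^ 2 := by
  have hF : ∀ t, HasDerivAt (fun t => 9 * (r1 t) ^ 2 + 4 * (r2 t) ^ 2 + (r3 t) ^ 2) 0 t := by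
    intro t
    have := (((h1 t).pow 2).const_mul 9 |>.add (((h2 t).pow 2).const_mul 4)).add ((h3 t).pow 2)
    refine this.congr_deriv ?_
    norm_num only
    ring
  have hG : ∀ t, HasDerivAt (fun t => 2 * (r2 t) ^ 2 - (r3 t) ^ 2) 0 t := by
    intro t
    have := (((h2 t).pow 2).const_mul 2).sub ((h3 t).pow 2)
    refine this.congr_deriv ?_
    norm_num only
    ring
  intro t s
  constructor
  · exact is_const_of_deriv_eq_zero (fun x => (hF x).differentiableAt)
      (fun x => (hF x).deriv) t s
  · exact is_const_of_deriv_eq_zero (fun x => (hG x).differentiableAt)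
      (fun x => (hG x).deriv) t s
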